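/- Let w_1,…,w_m be nonzero reals, W = diag(w_1,…,w_m), and a_1,…,a_m ∈ R^n the columns of a matrix A. If s_1,…,s_k are i.i.d. random indices with P(s = i) = w_i^{-2}/‖W^{-1}‖_F², then E det(xI - Σ_{i=1}^k w_{s_i}² a_{s_i} a_{s_i}ᵀ) = x^{n-k} · ∏_{i=1}^{rank(A)} (1 - (σ_i(A)²/‖W^{-1}‖_F²) ∂_x) x^k, where σ_i(A) are the nonzero singular values of A. -/

import Mathlib

open Matrix Polynomial BigOperators Finset

lemma foldr_ops (c : ℕ → ℝ) (r : ℕ) (q : ℝ[X]) :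
    (List.range r).foldr (fun i p => p - C (c i) * derivative p) q
      = ∑ t ∈ (Finset.range r).powerset, C (∏ i ∈ t, -(c i)) * (derivative^[t.card] q) := by
  induction r generalizing q with
  | zero => simp
  | succ r ih =>
    rw [List.range_succ, List.foldr_append]
    show (List.range r).foldr _ (q - C (c r) * derivative q) = _
    rw [ih, Finset.range_add_one, Finset.sum_powerset_insert (by simp)]
    have h1 : ∀ t ∈ (Finset.range r).powerset,
        C (∏ i ∈ t, -(c i)) * derivative^[t.card] (q - C (c r) * derivative q)
        = C (∏ i ∈ t, -(c i)) * derivative^[t.card] q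
          + C (∏ i ∈ insert r t, -(c i)) * derivative^[(insert r t).card] q := by
      intro t ht
      have hr : r ∉ t := fun h => by
        simpa using (Finset.mem_powerset.mp ht h)
      rw [Polynomial.iterate_derivative_sub, Polynomial.iterate_derivative_C_mul,
        Finset.prod_insert hr, Finset.card_insert_of_notMem hr, mul_sub,
        ← Function.iterate_succ_apply, _root_.map_mul, map_neg]
      ring
    rw [Finset.sum_congr rfl h1, Finset.sum_add_distrib]

def Dmat {n : ℕ} {ι : Type*} (v : ι → Fin n → ℝ) (g : Fin n → Option ι) :
    Matrix (Fin n) (Fin n) ℝ :=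
  Matrix.of fun j j' => (g j).elim (if j = j' then 1 else 0) (fun i => v i j')

def InjOS {n : ℕ} {β : Type*} (g : Fin n → Option β) : Prop :=
  ∀ j j' l, g j = some l → g j' = some l → j = j'

instance {n k : ℕ} : DecidablePred (InjOS (n := n) (β := Fin k)) := by
  intro g; unfold InjOS; infer_instance

lemma expandCP {n : ℕ} {ι : Type*} [Fintype ι] (v : ι → Fin n → ℝ) (μ : ι → ℝ) :
    (∑ i : ι, μ i • Matrix.vecMulVec (v i) (v i)).charpoly
      = ∑ g : Fin n → Option ι,
          (∏ j, (g j).elim X (fun i => C (-(μ i * v i j)))) * C (Dmat v g).det := by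
  classical
  rw [Matrix.charpoly]
  have hrows : ∀ j : Fin n, (charmatrix (∑ i : ι, μ i • Matrix.vecMulVec (v i) (v i))) j
      = ∑ o : Option ι,
          (Option.elim o X (fun i => C (-(μ i * v i j)))) •
            (Option.elim o ((1 : Matrix (Fin n) (Fin n) ℝ[X]) j) (fun i j' => C (v i j'))) := by
    intro j
    funext j'
    rw [Fintype.sum_option]
    simp only [charmatrix_apply, Matrix.sum_apply, Matrix.smul_apply, Matrix.vecMulVec_apply,
      Matrix.diagonal_apply, Finset.sum_apply, Pi.add_apply, Pi.smul_apply, Option.elim,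
      Matrix.one_apply, smul_eq_mul, map_sum]
    rw [mul_ite, mul_one, mul_zero, sub_eq_add_neg, ← Finset.sum_neg_distrib]
    congr 1
    apply Finset.sum_congr rfl
    intro i _
    rw [← map_neg, ← Polynomial.C_mul]
    ring_nf
  have hms := MultilinearMap.map_sum
    (Matrix.detRowAlternating (R := ℝ[X]) (n := Fin n)).toMultilinearMap
    (fun j (o : Option ι) => (Option.elim o X (fun i => C (-(μ i * v i j)))) •
            (Option.elim o ((1 : Matrix (Fin n) (Fin n) ℝ[X]) j) (fun i j' => C (v i j'))))
  simp only [AlternatingMap.coe_multilinearMap] at hms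
  have hdet : (charmatrix (∑ i : ι, μ i • Matrix.vecMulVec (v i) (v i))).det
      = Matrix.detRowAlternating (fun j => ∑ o : Option ι,
          (Option.elim o X (fun i => C (-(μ i * v i j)))) •
            (Option.elim o ((1 : Matrix (Fin n) (Fin n) ℝ[X]) j) (fun i j' => C (v i j')))) := by
    rw [← funext hrows]
    rfl
  rw [hdet, hms]
  apply Finset.sum_congr rfl
  intro g _
  have hsmul := MultilinearMap.map_smul_univ
    (Matrix.detRowAlternating (R := ℝ[X]) (n := Fin n)).toMultilinearMap
    (fun j => (Option.elim (g j) X (fun i => C (-(μ i * v i j)))))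
    (fun j => (Option.elim (g j) ((1 : Matrix (Fin n) (Fin n) ℝ[X]) j) (fun i j' => C (v i j'))))
  simp only [AlternatingMap.coe_multilinearMap] at hsmul
  rw [hsmul]
  have : Matrix.detRowAlternating (fun j => (g j).elim ((1 : Matrix (Fin n) (Fin n) ℝ[X]) j) (fun i j' => C (v i j')))
      = C (Dmat v g).det := by
    have hrowsEq : (fun j => (g j).elim ((1 : Matrix (Fin n) (Fin n) ℝ[X]) j) (fun i j' => C (v i j')))
        = ((Dmat v g).map C : Matrix (Fin n) (Fin n) ℝ[X]) := by
      funext j j'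
      cases h : g j <;> simp [Dmat, Matrix.one_apply, h, apply_ite C]
    rw [hrowsEq]
    have h2 := (Polynomial.C : ℝ →+* ℝ[X]).map_det (Dmat v g)
    rw [RingHom.mapMatrix_apply] at h2
    exact h2.symm
  rw [this, smul_eq_mul]

lemma prod_elim_split {n : ℕ} {ι : Type*} (g : Fin n → Option ι) (f : Fin n → ι → ℝ) :
    (∏ j, (g j).elim X (fun i => C (f j i)))
      = X ^ (n - (univ.filter fun j => (g j).isSome).card)
        * C (∏ j, (g j).elim 1 (fun i => f j i)) := by
  classical
  rw [← Finset.prod_filter_mul_prod_filter_not univ (fun j => (g j).isSome)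
    (fun j => (g j).elim X (fun i => C (f j i)))]
  rw [← Finset.prod_filter_mul_prod_filter_not univ (fun j => (g j).isSome)
    (fun j => (g j).elim 1 (fun i => f j i))]
  have h1 : ∏ j ∈ univ.filter (fun j => (g j).isSome), (g j).elim X (fun i => C (f j i))
      = C (∏ j ∈ univ.filter (fun j => (g j).isSome), (g j).elim 1 (fun i => f j i)) := by
    rw [map_prod]
    apply Finset.prod_congr rfl
    intro j hj
    have := (Finset.mem_filter.mp hj).2
    obtain ⟨i, hi⟩ := Option.isSome_iff_exists.mp this
    simp [hi]
  have h2 : ∏ j ∈ univ.filter (fun j => ¬ (g j).isSome), (g j).elim X (fun i => C (f j i))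
      = X ^ (n - (univ.filter fun j => (g j).isSome).card) := by
    have hx : ∀ j ∈ univ.filter (fun j => ¬ (g j).isSome),
        (g j).elim X (fun i => C (f j i)) = X := by
      intro j hj
      have := (Finset.mem_filter.mp hj).2
      rw [Option.not_isSome_iff_eq_none.mp this]
      rfl
    rw [Finset.prod_congr rfl hx, Finset.prod_const]
    congr 1
    have := Finset.card_filter_add_card_filter_not
      (s := (univ : Finset (Fin n))) (p := fun j => (g j).isSome)
    simp only [Finset.card_univ, Fintype.card_fin] at this
    omega
  have h3 : ∏ j ∈ univ.filter (fun j => ¬ (g j).isSome), (g j).elim 1 (fun i => f j i)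
      = 1 := by
    apply Finset.prod_eq_one
    intro j hj
    have := (Finset.mem_filter.mp hj).2
    rw [Option.not_isSome_iff_eq_none.mp this]
    rfl
  rw [h1, h2, h3, mul_one, mul_comm]

lemma Dmat_det_zero {n : ℕ} {ι : Type*} (v : ι → Fin n → ℝ) (g : Fin n → Option ι)
    (h : ¬ InjOS g) : (Dmat v g).det = 0 := by
  unfold InjOS at h
  push_neg at h
  obtain ⟨j, j', l, hj, hj', hne⟩ := h
  apply Matrix.det_zero_of_row_eq hne
  funext j''
  show (Dmat v g) j j'' = (Dmat v g) j' j''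
  simp [Dmat, hj, hj']

lemma marg {k m : ℕ} (p : Fin m → ℝ) (hp : ∑ l, p l = 1) (T : Finset (Fin k × Fin m))
    (hT : ∀ a ∈ T, ∀ b ∈ T, a.1 = b.1 → a = b) :
    ∑ s : Fin k → Fin m, (if (∀ a ∈ T, s a.1 = a.2) then ∏ i, p (s i) else 0)
      = ∏ a ∈ T, p a.2 := by
  classical
  have hterm : ∀ s : Fin k → Fin m,
      (if (∀ a ∈ T, s a.1 = a.2) then ∏ i, p (s i) else 0)
      = ∏ i, (p (s i) * (if (∀ a ∈ T, a.1 = i → a.2 = s i) then 1 else 0)) := by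
    intro s
    by_cases h : ∀ a ∈ T, s a.1 = a.2
    · rw [if_pos h]
      apply Finset.prod_congr rfl
      intro i _
      rw [if_pos, mul_one]
      intro a ha hai
      rw [← hai]; exact (h a ha).symm
    · rw [if_neg h]
      push_neg at h
      obtain ⟨a, ha, hne⟩ := h
      refine (Finset.prod_eq_zero (Finset.mem_univ a.1) ?_).symm
      rw [if_neg, mul_zero]
      intro hall
      exact hne (hall a ha rfl).symm
  have hps := Fintype.prod_sum (fun (i : Fin k) (x : Fin m) => p x * (if (∀ a ∈ T, a.1 = i → a.2 = x) then (1:ℝ) else 0))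
  rw [Finset.sum_congr rfl (fun s _ => hterm s), ← hps]
  have hfac : ∀ i : Fin k,
      (∑ x : Fin m, p x * (if (∀ a ∈ T, a.1 = i → a.2 = x) then 1 else 0))
      = ∏ a ∈ T.filter (fun a => a.1 = i), p a.2 := by
    intro i
    rcases (T.filter (fun a => a.1 = i)).eq_empty_or_nonempty with he | ⟨a₀, ha₀⟩
    · rw [he, Finset.prod_empty]
      have : ∀ x : Fin m, (if (∀ a ∈ T, a.1 = i → a.2 = x) then (1:ℝ) else 0) = 1 := by
        intro x
        rw [if_pos]
        intro a ha hai
        exfalso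
        rw [Finset.eq_empty_iff_forall_notMem] at he
        exact he a (Finset.mem_filter.mpr ⟨ha, hai⟩)
      simp only [this, mul_one, hp]
    · have ha₀' := Finset.mem_filter.mp ha₀
      have hsingle : T.filter (fun a => a.1 = i) = {a₀} := by
        apply Finset.eq_singleton_iff_unique_mem.mpr
        refine ⟨ha₀, fun b hb => ?_⟩
        have hb' := Finset.mem_filter.mp hb
        exact hT b hb'.1 a₀ ha₀'.1 (hb'.2.trans ha₀'.2.symm)
      rw [hsingle, Finset.prod_singleton]
      have : ∀ x : Fin m, (if (∀ a ∈ T, a.1 = i → a.2 = x) then (1:ℝ) else 0)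
          = if x = a₀.2 then 1 else 0 := by
        intro x
        by_cases hx : x = a₀.2
        · subst hx
          rw [if_pos rfl, if_pos]
          intro a ha hai
          have : a = a₀ := hT a ha a₀ ha₀'.1 (hai.trans ha₀'.2.symm)
          rw [this]
        · rw [if_neg hx, if_neg]
          intro hall
          exact hx (hall a₀ ha₀'.1 ha₀'.2).symm
      simp only [this, mul_ite, mul_one, mul_zero]
      rw [Finset.sum_ite_eq' univ a₀.2 p]
      simp
  rw [Finset.prod_congr rfl (fun i _ => hfac i)]
  exact Finset.prod_fiberwise_of_maps_to (g := fun a : Fin k × Fin m => a.1)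
    (fun a _ => Finset.mem_univ a.1) (fun a : Fin k × Fin m => p a.2)

lemma card_compat {n k m : ℕ} (gm : Fin n → Option (Fin m)) :
    (univ.filter fun gk : Fin n → Option (Fin k) =>
        (∀ j, (gk j).isSome = (gm j).isSome) ∧ InjOS gk).card
      = Nat.descFactorial k ((univ.filter fun j => (gm j).isSome).card) := by
  classical
  rw [← Fintype.card_subtype]
  have e : {gk : Fin n → Option (Fin k) //
      (∀ j, (gk j).isSome = (gm j).isSome) ∧ InjOS gk}
      ≃ ({j : Fin n // (gm j).isSome} ↪ Fin k) := by
    refine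
      { toFun := fun gk => ⟨fun j => (gk.1 j.1).get (by rw [gk.2.1]; exact j.2), ?_⟩
        invFun := fun e =>
          ⟨fun j => if h : (gm j).isSome then some (e ⟨j, h⟩) else none, ?_, ?_⟩
        left_inv := ?_
        right_inv := ?_ }
    · rintro ⟨j, hj⟩ ⟨j', hj'⟩ hg
      have h1 : (gk.1 j).isSome := by rw [gk.2.1]; exact hj
      have h2 : (gk.1 j').isSome := by rw [gk.2.1]; exact hj'
      have : gk.1 j = gk.1 j' := by
        rw [← Option.some_get h1, ← Option.some_get h2]
        exact congrArg some hg
      obtain ⟨l, hl⟩ := Option.isSome_iff_exists.mp h1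
      exact Subtype.ext (gk.2.2 j j' l hl (by rw [← this]; exact hl))
    · intro j
      by_cases h : (gm j).isSome <;> simp [h]
    · intro j j' l hj hj'
      rw [dite_eq_iff] at hj hj'
      rcases hj with ⟨h, he⟩ | ⟨h, he⟩
      · rcases hj' with ⟨h', he'⟩ | ⟨h', he'⟩
        · have := Option.some_injective _ (he.trans he'.symm)
          exact congrArg Subtype.val
            ((EmbeddingLike.injective e) (this : e.toFun ⟨j, h⟩ = e.toFun ⟨j', h'⟩))
        · exact absurd he' (by simp)
      · exact absurd he (by simp)
    · rintro ⟨gk, hsup, hinj⟩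
      apply Subtype.ext
      funext j
      by_cases h : (gm j).isSome
      · show (if h : (gm j).isSome then some _ else none) = gk j
        rw [dif_pos h]
        exact Option.some_get _
      · show (if h : (gm j).isSome then some _ else none) = gk j
        rw [dif_neg h]
        have : ¬ (gk j).isSome := by rw [hsup]; exact h
        exact (Option.not_isSome_iff_eq_none.mp this).symm
    · intro e
      apply Function.Embedding.ext
      rintro ⟨j, hj⟩
      simp [hj]
  rw [Fintype.card_congr e, Fintype.card_embedding_eq, Fintype.card_fin,
    Fintype.card_subtype]

lemma Ncore {n m k : ℕ} (p : Fin m → ℝ) (hp : ∑ l, p l = 1)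
    (gm : Fin n → Option (Fin m)) (hinj : InjOS gm) :
    ∑ s : Fin k → Fin m, ∑ gk : Fin n → Option (Fin k),
        (if (fun j => (gk j).map s) = gm then ∏ i, p (s i) else 0)
      = (Nat.descFactorial k ((univ.filter fun j => (gm j).isSome).card) : ℝ)
        * ∏ j, (gm j).elim 1 p := by
  classical
  rw [Finset.sum_comm]
  have hInner : ∀ gk : Fin n → Option (Fin k),
      (∑ s : Fin k → Fin m, if (fun j => (gk j).map s) = gm then ∏ i, p (s i) else 0)
      = if (∀ j, (gk j).isSome = (gm j).isSome) ∧ InjOS gk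
          then ∏ j, (gm j).elim 1 p else 0 := by
    intro gk
    by_cases hc : (∀ j, (gk j).isSome = (gm j).isSome) ∧ InjOS gk
    · rw [if_pos hc]
      obtain ⟨hsup, hinjk⟩ := hc
      set T : Finset (Fin k × Fin m) :=
        ((univ.filter fun j => (gm j).isSome).attach).image
          (fun j => ((gk j.1).get (by
              have h := j.2; rw [Finset.mem_filter] at h; rw [hsup]; exact h.2),
            (gm j.1).get (by
              have h := j.2; rw [Finset.mem_filter] at h; exact h.2))) with hTdef
      have hmemT : ∀ (j : Fin n) (i : Fin k) (l : Fin m),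
          gk j = some i → gm j = some l → (i, l) ∈ T := by
        intro j i l hgk hgm
        rw [hTdef, Finset.mem_image]
        refine ⟨⟨j, Finset.mem_filter.mpr ⟨Finset.mem_univ _, by simp [hgm]⟩⟩,
          Finset.mem_attach _ _, ?_⟩
        simp only [hgk, hgm, Option.get_some]
      have hmemT' : ∀ a ∈ T, ∃ j, gk j = some a.1 ∧ gm j = some a.2 := by
        intro a ha
        rw [hTdef, Finset.mem_image] at ha
        obtain ⟨j, _, hj⟩ := ha
        refine ⟨j.1, ?_, ?_⟩
        · rw [← hj]; exact (Option.some_get _).symm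
        · rw [← hj]; exact (Option.some_get _).symm
      have hTuniq : ∀ a ∈ T, ∀ b ∈ T, a.1 = b.1 → a = b := by
        intro a ha b hb hab
        obtain ⟨j, hgk, hgm⟩ := hmemT' a ha
        obtain ⟨j', hgk', hgm'⟩ := hmemT' b hb
        have hjj : j = j' := hinjk j j' a.1 hgk (by rw [hab]; exact hgk')
        rw [hjj] at hgm
        rw [hgm] at hgm'
        exact Prod.ext hab (Option.some_injective _ hgm')
      have hcond : ∀ s : Fin k → Fin m,
          ((fun j => (gk j).map s) = gm) ↔ (∀ a ∈ T, s a.1 = a.2) := by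
        intro s
        constructor
        · intro h a ha
          obtain ⟨j, hgk, hgm⟩ := hmemT' a ha
          have := congrFun h j
          rw [hgk] at this
          simp only [Option.map_some] at this
          rw [hgm] at this
          exact Option.some_injective _ this
        · intro h
          funext j
          cases hgk : gk j with
          | none =>
            have : ¬ (gm j).isSome := by rw [← hsup]; simp [hgk]
            simp [Option.not_isSome_iff_eq_none.mp this]
          | some i =>
            have hs : (gm j).isSome := by rw [← hsup]; simp [hgk]
            obtain ⟨l, hl⟩ := Option.isSome_iff_exists.mp hs
            have := h _ (hmemT j i l hgk hl)
            simp only [Option.map_some]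
            rw [hl, this]
      calc (∑ s : Fin k → Fin m, if (fun j => (gk j).map s) = gm then ∏ i, p (s i) else 0)
          = ∑ s : Fin k → Fin m, (if (∀ a ∈ T, s a.1 = a.2) then ∏ i, p (s i) else 0) := by
            apply Finset.sum_congr rfl; intro s _; exact if_congr (hcond s) rfl rfl
        _ = ∏ a ∈ T, p a.2 := marg p hp T hTuniq
        _ = ∏ j, (gm j).elim 1 p := by
            rw [hTdef, Finset.prod_image ?inj]
            case inj =>
              intro x _ y _ hxy
              have h1 := congrArg Prod.fst hxy
              simp only at h1
              have hx : (gk x.1).isSome := by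
                have h := x.2; rw [Finset.mem_filter] at h; rw [hsup]; exact h.2
              have hy : (gk y.1).isSome := by
                have h := y.2; rw [Finset.mem_filter] at h; rw [hsup]; exact h.2
              apply Subtype.ext
              apply hinjk x.1 y.1 ((gk x.1).get hx) (Option.some_get hx).symm
              rw [← Option.some_get hy]
              exact congrArg some h1.symm
            rw [← Finset.prod_filter_mul_prod_filter_not univ (fun j => (gm j).isSome)
              (fun j => (gm j).elim 1 p)]
            have h2 : ∏ j ∈ univ.filter (fun j => ¬ (gm j).isSome), (gm j).elim 1 p = 1 := by
              apply Finset.prod_eq_one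
              intro j hj
              have := (Finset.mem_filter.mp hj).2
              rw [Option.not_isSome_iff_eq_none.mp this]
              rfl
            rw [h2, mul_one, ← Finset.prod_attach (univ.filter fun j => (gm j).isSome)
              (fun j => (gm j).elim 1 p)]
            apply Finset.prod_congr rfl
            intro j _
            obtain ⟨l, hl⟩ := Option.isSome_iff_exists.mp (Finset.mem_filter.mp j.2).2
            simp [hl]
    · rw [if_neg hc]
      apply Finset.sum_eq_zero
      intro s _
      rw [if_neg]
      intro heq
      apply hc
      constructor
      · intro j
        have := congrFun heq j
        rw [← this, Option.isSome_map]
      · intro j j' i hj hj'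
        have h1 := congrFun heq j
        have h2 := congrFun heq j'
        rw [hj] at h1
        rw [hj'] at h2
        exact hinj j j' (s i) (by rw [← h1]; rfl) (by rw [← h2]; rfl)
  rw [Finset.sum_congr rfl (fun gk _ => hInner gk), ← Finset.sum_filter, Finset.sum_const,
    card_compat gm, nsmul_eq_mul]

lemma esymm_bridge {n r : ℕ} (σ : ℕ → ℝ) (hzero : ∀ i, r ≤ i → σ i = 0) (hrn : r ≤ n)
    (d : ℕ) :
    ∑ t ∈ Finset.powersetCard d (univ : Finset (Fin n)), ∏ i ∈ t, (-(σ (i : ℕ) ^ 2))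
      = ∑ t ∈ Finset.powersetCard d (Finset.range r), ∏ i ∈ t, (-(σ i ^ 2)) := by
  classical
  have h1 : ∑ t ∈ Finset.powersetCard d (univ : Finset (Fin n)), ∏ i ∈ t, (-(σ (i : ℕ) ^ 2))
      = ∑ t ∈ Finset.powersetCard d (Finset.range n), ∏ i ∈ t, (-(σ i ^ 2)) := by
    have hmap : (Finset.range n) = (univ : Finset (Fin n)).map Fin.valEmbedding := by
      rw [Fin.map_valEmbedding_univ]
      ext x
      simp
    rw [hmap, Finset.powersetCard_map, Finset.sum_map]
    apply Finset.sum_congr rfl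
    intro t _
    show _ = ∏ i ∈ t.map Fin.valEmbedding, -σ i ^ 2
    rw [Finset.prod_map]
    rfl
  rw [h1]
  rw [← Finset.sum_subset (Finset.powersetCard_mono (Finset.range_subset_range.mpr hrn))]
  intro t ht hnt
  have ht' := Finset.mem_powersetCard.mp ht
  have : ∃ i ∈ t, r ≤ i := by
    by_contra hall
    push_neg at hall
    apply hnt
    apply Finset.mem_powersetCard.mpr
    refine ⟨fun x hx => Finset.mem_range.mpr (hall x hx), ht'.2⟩
  obtain ⟨i, hit, hri⟩ := this
  apply Finset.prod_eq_zero hit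
  rw [hzero i hri]
  simp

lemma mside {n m : ℕ} (A : Matrix (Fin n) (Fin m) ℝ) :
    (A * Aᵀ).charpoly
      = ∑ d ∈ Finset.range (n+1), X ^ (n - d) *
          C (∑ g ∈ univ.filter (fun g : Fin n → Option (Fin m) =>
              (univ.filter fun j => (g j).isSome).card = d),
             (∏ j, (g j).elim 1 fun l => -(A j l)) * (Dmat (fun l j => A j l) g).det) := by
  classical
  have hAA : A * Aᵀ = ∑ l : Fin m, (1:ℝ) • Matrix.vecMulVec (fun j => A j l) (fun j => A j l) := by
    ext j j'
    simp [Matrix.mul_apply, Matrix.vecMulVec_apply, Matrix.sum_apply, Matrix.transpose_apply]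
  rw [hAA, expandCP]
  have hterm : ∀ g : Fin n → Option (Fin m),
      (∏ j, (g j).elim X (fun l => C (-(1 * A j l)))) * C ((Dmat (fun l j => A j l) g).det)
      = X ^ (n - (univ.filter fun j => (g j).isSome).card) *
        C ((∏ j, (g j).elim 1 fun l => -(A j l)) * (Dmat (fun l j => A j l) g).det) := by
    intro g
    rw [show (∏ j, (g j).elim X (fun l => C (-(1 * A j l))))
        = ∏ j, (g j).elim X (fun l => C (-(A j l))) from by
      apply Finset.prod_congr rfl; intro j _; cases hgj : g j <;> simp [hgj]]
    rw [prod_elim_split g (fun j l => -(A j l)), _root_.map_mul, mul_assoc]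
  rw [Finset.sum_congr rfl (fun g _ => hterm g)]
  rw [← Finset.sum_fiberwise_of_maps_to
    (g := fun g : Fin n → Option (Fin m) => (univ.filter fun j => (g j).isSome).card)
    (t := Finset.range (n+1))
    (fun g _ => Finset.mem_range.mpr (Nat.lt_succ_of_le
      ((Finset.card_filter_le _ _).trans (by simp))))]
  apply Finset.sum_congr rfl
  intro d _
  rw [map_sum, Finset.mul_sum]
  apply Finset.sum_congr rfl
  intro g hg
  rw [(Finset.mem_filter.mp hg).2]

lemma coeff_of_rep {n : ℕ} (rc : ℕ → ℝ) (P : ℝ[X])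
    (hP : P = ∑ d ∈ Finset.range (n+1), X ^ (n-d) * C (rc d)) (d : ℕ) (hd : d ≤ n) :
    rc d = P.coeff (n - d) := by
  symm
  rw [hP, Polynomial.finset_sum_coeff]
  rw [Finset.sum_eq_single d]
  · rw [mul_comm, Polynomial.coeff_C_mul, Polynomial.coeff_X_pow, if_pos rfl, mul_one]
  · intro b hb hbd
    rw [mul_comm, Polynomial.coeff_C_mul, Polynomial.coeff_X_pow, if_neg, mul_zero]
    rw [Finset.mem_range] at hb
    omega
  · intro hd'
    exact absurd (Finset.mem_range.mpr (Nat.lt_succ_of_le hd)) hd'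

lemma vieta_coeff {n : ℕ} (σ : ℕ → ℝ) (d : ℕ) (hd : d ≤ n) :
    (∏ i : Fin n, (X - C (σ (i:ℕ) ^ 2))).coeff (n - d)
      = ∑ t ∈ Finset.powersetCard d (univ : Finset (Fin n)), ∏ i ∈ t, (-(σ (i:ℕ) ^ 2)) := by
  have h : ∀ i : Fin n, (X : ℝ[X]) - C (σ (i:ℕ)^2) = X + C (-(σ (i:ℕ)^2)) := by
    intro i; rw [map_neg, sub_eq_add_neg]
  rw [Finset.prod_congr rfl (fun i _ => h i)]
  rw [Finset.prod_X_add_C_coeff (univ : Finset (Fin n)) (fun i : Fin n => -(σ (i:ℕ)^2))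
    (k := n - d) (by rw [Finset.card_univ, Fintype.card_fin]; omega)]
  have : #(univ : Finset (Fin n)) - (n - d) = d := by
    rw [Finset.card_univ, Fintype.card_fin]; omega
  rw [this]

lemma kside {n m k : ℕ} (A : Matrix (Fin n) (Fin m) ℝ) (w : Fin m → ℝ) (hw : ∀ i, w i ≠ 0)
    (hm : 0 < m) :
    (∑ s : Fin k → Fin m,
        C (∏ i, ((w (s i))⁻¹ ^ 2 / ∑ j, (w j)⁻¹ ^ 2)) *
          (∑ i, ((w (s i)) ^ 2) •
              Matrix.vecMulVec (fun j => A j (s i)) (fun j => A j (s i))).charpoly)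
    = ∑ d ∈ Finset.range (n+1),
        C ((Nat.descFactorial k d : ℝ) * ((∑ j, (w j)⁻¹ ^ 2)⁻¹) ^ d) *
          (X ^ (n - d) * C (∑ g ∈ univ.filter (fun g : Fin n → Option (Fin m) =>
              (univ.filter fun j => (g j).isSome).card = d),
             (∏ j, (g j).elim 1 fun l => -(A j l)) * (Dmat (fun l j => A j l) g).det)) := by
  classical
  set Z : ℝ := ∑ j, (w j)⁻¹ ^ 2 with hZdef
  have hZpos : 0 < Z := by
    apply Finset.sum_pos
    · intro l _
      have : (w l)⁻¹ ≠ 0 := inv_ne_zero (hw l)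
      positivity
    · exact ⟨⟨0, hm⟩, Finset.mem_univ _⟩
  set p : Fin m → ℝ := fun l => (w l)⁻¹ ^ 2 / Z with hpdef
  have hp : ∑ l, p l = 1 := by
    rw [hpdef, ← Finset.sum_div, ← hZdef, div_self (ne_of_gt hZpos)]
  set colA : Fin m → Fin n → ℝ := fun l j => A j l with hcolA
  set Vf : (Fin n → Option (Fin m)) → ℝ[X] := fun g =>
    (∏ j, (g j).elim X (fun l => C (-(w l ^ 2 * A j l)))) * C ((Dmat colA g).det) with hVf
  set ns : (Fin n → Option (Fin m)) → ℕ :=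
    fun g => (univ.filter fun j => (g j).isSome).card with hns
  set ρ : (Fin n → Option (Fin m)) → ℝ := fun g =>
    (∏ j, (g j).elim 1 fun l => -(A j l)) * (Dmat colA g).det with hρ
  -- Step i: expand each charpoly and reindex
  have hstep1 : ∀ s : Fin k → Fin m,
      (∑ i, ((w (s i)) ^ 2) •
          Matrix.vecMulVec (fun j => A j (s i)) (fun j => A j (s i))).charpoly
      = ∑ gk : Fin n → Option (Fin k), Vf (fun j => (gk j).map s) := by
    intro s
    rw [expandCP (fun i j => A j (s i)) (fun i => (w (s i))^2)]
    apply Finset.sum_congr rfl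
    intro gk _
    have hD : Dmat (fun i j => A j (s i)) gk = Dmat colA (fun j => Option.map s (gk j)) := by
      ext j j'
      cases hgk : gk j <;> simp [Dmat, hgk, hcolA]
    rw [hVf, hD]
    congr 1
    apply Finset.prod_congr rfl
    intro j _
    cases hgk : gk j <;> simp only [hgk, Option.map_some, Option.map_none, Option.elim]
  -- Step ii: fiber over composite functions
  have hstep2 :
      (∑ s : Fin k → Fin m,
        C (∏ i, p (s i)) *
          (∑ gk : Fin n → Option (Fin k), Vf (fun j => (gk j).map s)))
      = ∑ gm : Fin n → Option (Fin m),
          C (∑ s : Fin k → Fin m, ∑ gk : Fin n → Option (Fin k),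
              if (fun j => (gk j).map s) = gm then ∏ i, p (s i) else 0) * Vf gm := by
    have hrhs : ∀ gm : Fin n → Option (Fin m),
        C (∑ s : Fin k → Fin m, ∑ gk : Fin n → Option (Fin k),
            if (fun j => (gk j).map s) = gm then ∏ i, p (s i) else 0) * Vf gm
        = ∑ s : Fin k → Fin m, ∑ gk : Fin n → Option (Fin k),
            (if (fun j => (gk j).map s) = gm then C (∏ i, p (s i)) * Vf gm else 0) := by
      intro gm
      rw [map_sum, Finset.sum_mul]
      apply Finset.sum_congr rfl
      intro s _
      rw [map_sum, Finset.sum_mul]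
      apply Finset.sum_congr rfl
      intro gk _
      rw [apply_ite C, map_zero, ite_mul, zero_mul]
    rw [Finset.sum_congr rfl (fun gm _ => hrhs gm)]
    rw [Finset.sum_comm]
    apply Finset.sum_congr rfl
    intro s _
    rw [Finset.mul_sum, Finset.sum_comm]
    apply Finset.sum_congr rfl
    intro gk _
    rw [Finset.sum_ite_eq univ (fun j => (gk j).map s)
      (fun gm => C (∏ i, p (s i)) * Vf gm)]
    simp
  -- Step iii: evaluate each gm-term
  have hstep3 : ∀ gm : Fin n → Option (Fin m),
      C (∑ s : Fin k → Fin m, ∑ gk : Fin n → Option (Fin k),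
          if (fun j => (gk j).map s) = gm then ∏ i, p (s i) else 0) * Vf gm
      = C ((Nat.descFactorial k (ns gm) : ℝ) * (Z⁻¹) ^ (ns gm)) * (X ^ (n - ns gm) * C (ρ gm)) := by
    intro gm
    by_cases hinj : InjOS gm
    · rw [Ncore p hp gm hinj]
      -- merge the probability product into the main product
      have hmerge : C (∏ j, (gm j).elim 1 p) * (∏ j, (gm j).elim X (fun l => C (-(w l ^ 2 * A j l))))
          = ∏ j, (gm j).elim X (fun l => C (-(A j l) * Z⁻¹)) := by
        rw [map_prod, ← Finset.prod_mul_distrib]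
        apply Finset.prod_congr rfl
        intro j _
        cases hgm : gm j with
        | none => simp
        | some l =>
          simp only [Option.elim]
          rw [← _root_.map_mul]
          congr 1
          rw [hpdef]
          have h1 : (w l)⁻¹ ^ 2 * w l ^ 2 = 1 := by
            rw [← mul_pow, inv_mul_cancel₀ (hw l), one_pow]
          have h2 : ((w l)⁻¹ ^ 2 / Z) * -(w l ^ 2 * A j l)
              = -((((w l)⁻¹ ^ 2) * (w l ^ 2)) * A j l) * Z⁻¹ := by
            rw [div_eq_mul_inv]; ring
          rw [h2, h1, one_mul]
      have hsplit : (∏ j, (gm j).elim X (fun l => C (-(A j l) * Z⁻¹)))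
          = X ^ (n - ns gm) * C ((∏ j, (gm j).elim 1 fun l => -(A j l)) * (Z⁻¹) ^ (ns gm)) := by
        rw [prod_elim_split gm (fun j l => -(A j l) * Z⁻¹)]
        congr 2
        rw [← Finset.prod_filter_mul_prod_filter_not univ (fun j => (gm j).isSome)
          (fun j => (gm j).elim 1 (fun l => -(A j l) * Z⁻¹))]
        rw [← Finset.prod_filter_mul_prod_filter_not univ (fun j => (gm j).isSome)
          (fun j => (gm j).elim 1 (fun l => -(A j l)))]
        have e1 : ∏ j ∈ univ.filter (fun j => ¬ (gm j).isSome),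
            (gm j).elim 1 (fun l => -(A j l) * Z⁻¹) = 1 := by
          apply Finset.prod_eq_one
          intro j hj
          rw [Option.not_isSome_iff_eq_none.mp (Finset.mem_filter.mp hj).2]
          rfl
        have e2 : ∏ j ∈ univ.filter (fun j => ¬ (gm j).isSome),
            (gm j).elim 1 (fun l => -(A j l)) = 1 := by
          apply Finset.prod_eq_one
          intro j hj
          rw [Option.not_isSome_iff_eq_none.mp (Finset.mem_filter.mp hj).2]
          rfl
        have e3 : ∏ j ∈ univ.filter (fun j => (gm j).isSome),
            (gm j).elim 1 (fun l => -(A j l) * Z⁻¹)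
            = ∏ j ∈ univ.filter (fun j => (gm j).isSome),
              (((gm j).elim 1 (fun l => -(A j l))) * Z⁻¹) := by
          apply Finset.prod_congr rfl
          intro j hj
          obtain ⟨l, hl⟩ := Option.isSome_iff_exists.mp (Finset.mem_filter.mp hj).2
          simp [hl]
        rw [e1, e2, mul_one, mul_one, e3, ← Finset.prod_mul_pow_card]
      calc C ((Nat.descFactorial k (ns gm) : ℝ) * ∏ j, (gm j).elim 1 p) * Vf gm
          = C ((Nat.descFactorial k (ns gm) : ℝ)) *
            ((C (∏ j, (gm j).elim 1 p) *
              (∏ j, (gm j).elim X (fun l => C (-(w l ^ 2 * A j l))))) *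
              C ((Dmat colA gm).det)) := by
            simp only [hVf, _root_.map_mul]; ring
        _ = C ((Nat.descFactorial k (ns gm) : ℝ)) *
            ((X ^ (n - ns gm) * C ((∏ j, (gm j).elim 1 fun l => -(A j l)) * (Z⁻¹) ^ (ns gm))) *
              C ((Dmat colA gm).det)) := by rw [hmerge, hsplit]
        _ = C ((Nat.descFactorial k (ns gm) : ℝ) * (Z⁻¹) ^ (ns gm)) * (X ^ (n - ns gm) * C (ρ gm)) := by
            simp only [hρ, _root_.map_mul]; ring
    · have hz : ((Dmat colA gm).det : ℝ) = 0 := Dmat_det_zero colA gm hinj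
      simp only [hVf, hρ, hz, map_zero, mul_zero, zero_mul, _root_.map_mul]
  rw [Finset.sum_congr rfl (fun s _ => by rw [hstep1 s]), hstep2,
    Finset.sum_congr rfl (fun gm _ => hstep3 gm)]
  -- Step iv: group by ns
  rw [← Finset.sum_fiberwise_of_maps_to
    (g := fun g : Fin n → Option (Fin m) => ns g)
    (t := Finset.range (n+1))
    (fun g _ => Finset.mem_range.mpr (Nat.lt_succ_of_le
      ((Finset.card_filter_le _ _).trans (by simp))))]
  apply Finset.sum_congr rfl
  intro d _
  rw [map_sum, Finset.mul_sum, Finset.mul_sum]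
  apply Finset.sum_congr rfl
  intro g hg
  rw [(Finset.mem_filter.mp hg).2]

lemma rhs_eval {n k r : ℕ} (σ : ℕ → ℝ) (Z : ℝ) (hkr : k ≤ r) (hrn : r ≤ n)
    (hzero : ∀ i, r ≤ i → σ i = 0) :
    X ^ (n - k) * (List.range r).foldr
        (fun i q => q - C ((σ i) ^ 2 / Z) * derivative q) (X ^ k)
      = ∑ d ∈ Finset.range (n+1),
          C ((Nat.descFactorial k d : ℝ) * (Z⁻¹) ^ d) *
            (X ^ (n - d) * C (∑ t ∈ Finset.powersetCard d (univ : Finset (Fin n)),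
                ∏ i ∈ t, (-(σ (i:ℕ) ^ 2)))) := by
  classical
  rw [foldr_ops (fun i => σ i ^ 2 / Z) r (X ^ k)]
  have hsub : Finset.range (r+1) ⊆ Finset.range (n+1) := Finset.range_subset_range.mpr (by omega)
  have hvanish : ∀ d ∈ Finset.range (n+1), d ∉ Finset.range (r+1) →
      C ((Nat.descFactorial k d : ℝ) * (Z⁻¹) ^ d) *
        (X ^ (n - d) * C (∑ t ∈ Finset.powersetCard d (univ : Finset (Fin n)),
            ∏ i ∈ t, (-(σ (i:ℕ) ^ 2)))) = 0 := by
    intro d _ hd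
    rw [Finset.mem_range] at hd
    push_neg at hd
    have : Nat.descFactorial k d = 0 :=
      Nat.descFactorial_eq_zero_iff_lt.mpr (by omega)
    rw [this]
    simp
  rw [← Finset.sum_subset hsub hvanish]
  have hcard : (Finset.range r).card = r := Finset.card_range r
  rw [Finset.sum_powerset, hcard, Finset.mul_sum]
  apply Finset.sum_congr rfl
  intro d hd
  rw [Finset.mem_range] at hd
  by_cases hdk : d ≤ k
  · have ht : ∀ t ∈ Finset.powersetCard d (Finset.range r),
        C (∏ i ∈ t, -(σ i ^ 2 / Z)) * (derivative^[t.card] (X ^ k : ℝ[X]))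
        = C ((∏ i ∈ t, -(σ i ^ 2)) * (Z⁻¹) ^ d) *
            ((Nat.descFactorial k d : ℝ[X]) * X ^ (k - d)) := by
      intro t htm
      have htc := (Finset.mem_powersetCard.mp htm).2
      rw [htc, Polynomial.iterate_derivative_X_pow_eq_natCast_mul k d]
      congr 2
      rw [← htc, Finset.prod_mul_pow_card]
      apply Finset.prod_congr rfl
      intro i _
      rw [div_eq_mul_inv]
      ring
    rw [Finset.sum_congr rfl ht, ← Finset.sum_mul,
      ← map_sum C (fun t => (∏ i ∈ t, -(σ i ^ 2)) * (Z⁻¹) ^ d) _,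
      ← Finset.sum_mul, esymm_bridge σ hzero hrn d]
    have hX : (X : ℝ[X]) ^ (n - d) = X ^ (n - k) * X ^ (k - d) := by
      rw [← pow_add]
      congr 1
      omega
    rw [hX, ← Polynomial.C_eq_natCast, _root_.map_mul, _root_.map_mul]
    ring
  · push_neg at hdk
    have hdf : Nat.descFactorial k d = 0 := Nat.descFactorial_eq_zero_iff_lt.mpr hdk
    have hz : ∀ t ∈ Finset.powersetCard d (Finset.range r),
        C (∏ i ∈ t, -(σ i ^ 2 / Z)) * (derivative^[t.card] (X ^ k : ℝ[X])) = 0 := by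
      intro t htm
      have htc := (Finset.mem_powersetCard.mp htm).2
      rw [htc, Polynomial.iterate_derivative_X_pow_eq_natCast_mul k d, hdf]
      simp
    rw [Finset.sum_congr rfl hz, Finset.sum_const, smul_zero, mul_zero, hdf]
    simp

/-- The expected characteristic polynomial of `∑_{i=1}^k w_{s_i}² a_{s_i} a_{s_i}ᵀ`,
where the i.i.d. indices `s_i` take the value `i` with probability
`w_i⁻² / ‖W⁻¹‖_F²`, equals
`x^{n-k} ∏_{i=1}^{rank A} (1 - (σ_i(A)²/‖W⁻¹‖_F²) ∂_x) x^k`.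
The singular values `σ` of `A` are encoded via the characteristic polynomial of `A Aᵀ`. -/
theorem expected_charpoly_formula
    (n m k : ℕ) (A : Matrix (Fin n) (Fin m) ℝ)
    (w : Fin m → ℝ) (hw : ∀ i, w i ≠ 0)
    (σ : ℕ → ℝ)
    (hchar : (A * Aᵀ).charpoly = ∏ i : Fin n, (X - C ((σ (i : ℕ)) ^ 2)))
    (hmono : Antitone σ)
    (hpos : ∀ i, i < A.rank → 0 < σ i)
    (hzero : ∀ i, A.rank ≤ i → σ i = 0)
    (hk : k ≤ A.rank) :
    (∑ s : Fin k → Fin m,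
        C (∏ i, ((w (s i))⁻¹ ^ 2 / ∑ j, (w j)⁻¹ ^ 2)) *
          (∑ i, ((w (s i)) ^ 2) •
              Matrix.vecMulVec (fun j => A j (s i)) (fun j => A j (s i))).charpoly)
      =
      X ^ (n - k) *
        (List.range A.rank).foldr
          (fun i q => q - C ((σ i) ^ 2 / ∑ j, (w j)⁻¹ ^ 2) * derivative q)
          (X ^ k) := by
  classical
  rcases Nat.eq_zero_or_pos m with hm0 | hm
  · subst hm0
    have hr0 : A.rank = 0 := le_antisymm (by simpa using A.rank_le_card_width) (Nat.zero_le _)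
    have hk0 : k = 0 := le_antisymm (hr0 ▸ hk) (Nat.zero_le _)
    subst hk0
    rw [hr0]
    simp only [List.range_zero, List.foldr_nil, pow_zero, Nat.sub_zero, mul_one]
    have hchar0 : (0 : Matrix (Fin n) (Fin n) ℝ).charpoly = X ^ n := by
      rw [Matrix.charpoly]
      have hcm : charmatrix (0 : Matrix (Fin n) (Fin n) ℝ)
          = Matrix.diagonal (fun _ => (X : ℝ[X])) := by
        ext j j'
        by_cases h : j = j' <;>
          simp [charmatrix_apply, h, Matrix.diagonal_apply]
      rw [hcm, Matrix.det_diagonal]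
      simp
    rw [Fintype.sum_unique (fun s : Fin 0 → Fin 0 =>
      C (∏ i, ((w (s i))⁻¹ ^ 2 / ∑ j, (w j)⁻¹ ^ 2)) *
        (∑ i, ((w (s i)) ^ 2) •
            Matrix.vecMulVec (fun j => A j (s i)) (fun j => A j (s i))).charpoly)]
    simp [hchar0]
  · have hrn : A.rank ≤ n := by simpa using A.rank_le_card_height
    rw [kside A w hw hm, rhs_eval σ (∑ j, (w j)⁻¹ ^ 2) hk hrn hzero]
    apply Finset.sum_congr rfl
    intro d hd
    rw [Finset.mem_range] at hd
    have hP : (∏ i : Fin n, (X - C ((σ (i : ℕ)) ^ 2)))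
        = ∑ d ∈ Finset.range (n+1), X ^ (n-d) *
            C (∑ g ∈ univ.filter (fun g : Fin n → Option (Fin m) =>
                (univ.filter fun j => (g j).isSome).card = d),
              (∏ j, (g j).elim 1 fun l => -(A j l)) * (Dmat (fun l j => A j l) g).det) :=
      hchar.symm.trans (mside A)
    have h1 := coeff_of_rep _ _ hP d (by omega)
    have h2 := vieta_coeff σ d (n := n) (by omega)
    rw [h1, h2]
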